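/- Let X be a nonnegative real-valued random variable such that for each n ∈ ℕ₀ = {0,1,2,…} there is a real sequence (p_k)_{k∈ℕ₀} with E[s^X] = ∑_{k=0}^n p_k s^k + o(s^n) as s → 0+. Then X takes values in ℕ₀ almost surely, each p_k is nonnegative, and P(X = k) = p_k for every k ∈ ℕ₀. -/

import Mathlib

open MeasureTheory ProbabilityTheory Filter Set
open scoped ENNReal NNReal Topology

noncomputable section

namespace GFAux

variable {Ω : Type*} [mΩ : MeasurableSpace Ω] {P : Measure Ω} [IsProbabilityMeasure P]
  {X : Ω → ℝ}

/-- The event that `X` avoids the values `0, 1, …, n-1`. -/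
def B (X : Ω → ℝ) (n : ℕ) : Set Ω := {ω | ∀ k : ℕ, k < n → X ω ≠ (k : ℝ)}

lemma measurableSet_B (hXm : Measurable X) (n : ℕ) : MeasurableSet (B X n) := by
  have h : B X n = ⋂ k ∈ Finset.range n, {ω | X ω = (k : ℝ)}ᶜ := by
    ext ω; simp [B]
  rw [h]
  exact MeasurableSet.biInter (Finset.range n).countable_toSet
    fun k _ => (hXm (measurableSet_singleton _)).compl

lemma meas_rpow (hXm : Measurable X) (s : ℝ) : Measurable fun ω => s ^ X ω := by
  measurability

lemma integrable_rpow (hXm : Measurable X) (hX0 : ∀ᵐ ω ∂P, 0 ≤ X ω)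
    {s : ℝ} (hs : 0 ≤ s) (hs1 : s ≤ 1) : Integrable (fun ω => s ^ X ω) P := by
  refine Integrable.mono' (integrable_const 1) (meas_rpow hXm s).aestronglyMeasurable ?_
  filter_upwards [hX0] with ω h0
  rw [Real.norm_eq_abs, abs_of_nonneg (Real.rpow_nonneg hs _)]
  exact Real.rpow_le_one hs hs1 h0

lemma decomp (hXm : Measurable X) (hX0 : ∀ᵐ ω ∂P, 0 ≤ X ω)
    {s : ℝ} (hs : 0 < s) (hs1 : s ≤ 1) (n : ℕ) :
    (∫ ω, s ^ X ω ∂P)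
      = (∑ k ∈ Finset.range n, (P {ω | X ω = (k : ℝ)}).toReal * s ^ k)
        + ∫ ω in B X n, s ^ X ω ∂P := by
  induction n with
  | zero =>
      have : B X 0 = Set.univ := by ext ω; simp [B]
      simp [this]
  | succ n ih =>
      have hint := integrable_rpow hXm hX0 hs.le hs1
      have hunion : {ω | X ω = (n : ℝ)} ∪ B X (n+1) = B X n := by
        ext ω
        constructor
        · rintro (h | h)
          · intro k hk
            rw [h]
            exact Nat.cast_injective.ne (Nat.ne_of_gt hk)
          · intro k hk; exact h k (hk.trans (Nat.lt_succ_self n))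
        · intro h
          by_cases hn : X ω = (n : ℝ)
          · exact Or.inl hn
          · refine Or.inr fun k hk => ?_
            rcases Nat.lt_succ_iff_lt_or_eq.1 hk with hk' | rfl
            · exact h k hk'
            · exact hn
      have hdisj : Disjoint {ω | X ω = (n : ℝ)} (B X (n+1)) := by
        rw [Set.disjoint_left]
        intro ω h1 h2
        exact h2 n (Nat.lt_succ_self n) h1
      have hmeas1 : MeasurableSet {ω | X ω = (n : ℝ)} := hXm (measurableSet_singleton _)
      have hsplit : ∫ ω in B X n, s ^ X ω ∂P
          = (∫ ω in {ω | X ω = (n : ℝ)}, s ^ X ω ∂P) + ∫ ω in B X (n+1), s ^ X ω ∂P := by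
        rw [← hunion, setIntegral_union hdisj (measurableSet_B hXm (n+1))
          hint.integrableOn hint.integrableOn]
      have hconst : ∫ ω in {ω | X ω = (n : ℝ)}, s ^ X ω ∂P
          = (P {ω | X ω = (n : ℝ)}).toReal * s ^ n := by
        rw [setIntegral_congr_fun hmeas1 (g := fun _ => s ^ n) ?_, setIntegral_const,
          smul_eq_mul, measureReal_def]
        intro ω hω
        rw [Set.mem_setOf_eq] at hω
        show s ^ X ω = s ^ n
        rw [hω, Real.rpow_natCast]
      rw [ih, hsplit, hconst, Finset.sum_range_succ]
      ring

lemma tendsto_rpow_zero {c : ℝ} (hc : 0 < c) :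
    Tendsto (fun s : ℝ => s ^ c) (nhdsWithin 0 (Set.Ioi 0)) (𝓝 0) := by
  have h := (Real.continuousAt_rpow_const 0 c (Or.inr hc.le)).tendsto
  rw [Real.zero_rpow hc.ne'] at h
  exact h.mono_left nhdsWithin_le_nhds

/-- Dominated convergence: the trimmed generating function divided by `s^n` tends to
`P(X = n)`. -/
lemma tendsto_ratio (hXm : Measurable X) (hX0 : ∀ᵐ ω ∂P, 0 ≤ X ω) (n : ℕ)
    (hae : ∀ᵐ ω ∂P, ω ∈ B X n → (n : ℝ) ≤ X ω) :
    Tendsto (fun s : ℝ => (∫ ω in B X n, s ^ X ω ∂P) / s ^ n)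
      (nhdsWithin 0 (Set.Ioi 0)) (𝓝 ((P {ω | X ω = (n : ℝ)}).toReal)) := by
  have hB := measurableSet_B hXm n
  have hsub : {ω | X ω = (n : ℝ)} ⊆ B X n := by
    intro ω h k hk
    rw [Set.mem_setOf_eq] at h
    rw [h]
    exact Nat.cast_injective.ne (Nat.ne_of_gt hk)
  -- DCT for fun s => ∫ ω in B X n, s ^ (X ω - n)
  have hDCT : Tendsto (fun s : ℝ => ∫ ω in B X n, s ^ (X ω - n) ∂P)
      (nhdsWithin 0 (Set.Ioi 0)) (𝓝 ((P {ω | X ω = (n : ℝ)}).toReal)) := by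
    have hms : MeasurableSet {ω' | X ω' = (n : ℝ)} := hXm (measurableSet_singleton _)
    have htarget : ∫ ω in B X n, ({ω' | X ω' = (n : ℝ)}.indicator (fun _ => (1:ℝ))) ω ∂P
        = (P {ω | X ω = (n : ℝ)}).toReal := by
      rw [setIntegral_indicator hms, Set.inter_eq_right.2 hsub, setIntegral_const,
        smul_eq_mul, mul_one, measureReal_def]
    rw [← htarget]
    refine tendsto_integral_filter_of_dominated_convergence (fun _ => (1:ℝ)) ?_ ?_
      (integrable_const 1) ?_
    · exact Eventually.of_forall fun s =>
        (meas_rpow (hXm.sub measurable_const) s).aestronglyMeasurable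
    · filter_upwards [Ioo_mem_nhdsGT_of_mem (Set.left_mem_Ico.2 one_pos)] with s hs
      filter_upwards [ae_restrict_of_ae hae, ae_restrict_mem hB] with ω h hm
      have hXn : (0:ℝ) ≤ X ω - n := by linarith [h hm]
      rw [Real.norm_eq_abs, abs_of_nonneg (Real.rpow_nonneg hs.1.le _)]
      exact Real.rpow_le_one hs.1.le hs.2.le hXn
    · filter_upwards [ae_restrict_of_ae hae, ae_restrict_mem hB] with ω h hm
      have hXn := h hm
      by_cases heq : X ω = (n : ℝ)
      · have : (fun s : ℝ => s ^ (X ω - n)) = fun _ => (1:ℝ) := by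
          funext s; rw [heq, sub_self, Real.rpow_zero]
        rw [this, Set.indicator_of_mem (by exact heq)]
        exact tendsto_const_nhds
      · have hgt : 0 < X ω - n := lt_of_le_of_ne (by linarith) (fun h' => heq (by linarith))
        rw [Set.indicator_of_notMem (by exact heq)]
        exact tendsto_rpow_zero hgt
  refine hDCT.congr' ?_
  filter_upwards [self_mem_nhdsWithin] with s hs
  rw [Set.mem_Ioi] at hs
  have hsn : s ^ n ≠ 0 := pow_ne_zero n hs.ne'
  rw [eq_comm, div_eq_iff hsn]
  rw [← integral_mul_const]
  refine setIntegral_congr_fun hB fun ω _ => ?_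
  rw [← Real.rpow_natCast s n, ← Real.rpow_add hs, sub_add_cancel]

/-- From the asymptotic expansion: the same ratio tends to `p n`. -/
lemma tendsto_ratio_p (hXm : Measurable X) (hX0 : ∀ᵐ ω ∂P, 0 ≤ X ω) (p : ℕ → ℝ)
    (hexp : ∀ n : ℕ,
      (fun s : ℝ => (∫ ω, s ^ X ω ∂P) - ∑ k ∈ Finset.range (n + 1), p k * s ^ k)
        =o[nhdsWithin 0 (Set.Ioi 0)] fun s => s ^ n) (n : ℕ)
    (hpq : ∀ k, k < n → (P {ω | X ω = (k : ℝ)}).toReal = p k) :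
    Tendsto (fun s : ℝ => (∫ ω in B X n, s ^ X ω ∂P) / s ^ n)
      (nhdsWithin 0 (Set.Ioi 0)) (𝓝 (p n)) := by
  have h0 := (hexp n).tendsto_div_nhds_zero
  have h1 := h0.add (tendsto_const_nhds (x := p n))
  rw [zero_add] at h1
  refine h1.congr' ?_
  filter_upwards [Ioo_mem_nhdsGT_of_mem (Set.left_mem_Ico.2 one_pos)] with s hs
  have hd := decomp hXm hX0 hs.1 hs.2.le n
  have hsum : ∑ k ∈ Finset.range n, (P {ω | X ω = (k : ℝ)}).toReal * s ^ k
      = ∑ k ∈ Finset.range n, p k * s ^ k := by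
    refine Finset.sum_congr rfl fun k hk => ?_
    rw [hpq k (Finset.mem_range.1 hk)]
  have hsn : s ^ n ≠ 0 := pow_ne_zero n hs.1.ne'
  rw [hd, hsum, Finset.sum_range_succ]
  field_simp
  ring

/-- No mass on `(n, n+1)`. -/
lemma null_Ioo (hXm : Measurable X) (hX0 : ∀ᵐ ω ∂P, 0 ≤ X ω) (p : ℕ → ℝ)
    (hexp : ∀ n : ℕ,
      (fun s : ℝ => (∫ ω, s ^ X ω ∂P) - ∑ k ∈ Finset.range (n + 1), p k * s ^ k)
        =o[nhdsWithin 0 (Set.Ioi 0)] fun s => s ^ n) (n : ℕ)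
    (hpq : ∀ k, k < n + 1 → (P {ω | X ω = (k : ℝ)}).toReal = p k) :
    P (X ⁻¹' Set.Ioo (n : ℝ) (n + 1)) = 0 := by
  by_contra hne
  have hex : ∃ m : ℕ, P (X ⁻¹' Set.Ioc (n : ℝ) (n + (1 - 1/(m+1)))) ≠ 0 := by
    by_contra hall
    push_neg at hall
    apply hne
    refine measure_mono_null ?_ (measure_iUnion_null hall)
    intro ω hω
    rw [Set.mem_preimage, Set.mem_Ioo] at hω
    have h2 : 0 < (n:ℝ) + 1 - X ω := by linarith
    obtain ⟨m, hm⟩ := exists_nat_one_div_lt h2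
    refine Set.mem_iUnion.2 ⟨m, ?_⟩
    rw [Set.mem_preimage, Set.mem_Ioc]
    constructor
    · exact hω.1
    · push_cast at hm ⊢; linarith
  obtain ⟨m, hm⟩ := hex
  set t : ℝ := 1 - 1/(m+1) with ht_def
  have ht1 : t < 1 := by
    rw [ht_def]; have : (0:ℝ) < 1/(m+1) := by positivity
    linarith
  set A : Set Ω := X ⁻¹' Set.Ioc (n : ℝ) (n + t) with hA_def
  set c : ℝ := (P A).toReal with hc_def
  have hc : 0 < c := ENNReal.toReal_pos hm (measure_ne_top P A)
  have hAsub : A ⊆ B X (n+1) := by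
    intro ω hω k hk
    rw [hA_def, Set.mem_preimage, Set.mem_Ioc] at hω
    have : (k:ℝ) ≤ n := by exact_mod_cast Nat.lt_succ_iff.1 hk
    intro heq; rw [heq] at hω; linarith [hω.1]
  have hAm : MeasurableSet A := hXm measurableSet_Ioc
  -- lower bound
  have hlow : ∀ s : ℝ, s ∈ Set.Ioo (0:ℝ) 1 →
      c * s ^ (t - 1) ≤ (∫ ω in B X (n+1), s ^ X ω ∂P) / s ^ (n+1) := by
    intro s hs
    have hint := integrable_rpow hXm hX0 (P := P) hs.1.le hs.2.le
    have h1 : ∫ ω in A, s ^ ((n:ℝ) + t) ∂P ≤ ∫ ω in A, s ^ X ω ∂P := by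
      refine setIntegral_mono_on (integrableOn_const (measure_ne_top P A))
        hint.integrableOn hAm fun ω hω => ?_
      rw [hA_def, Set.mem_preimage, Set.mem_Ioc] at hω
      exact Real.rpow_le_rpow_of_exponent_ge hs.1 hs.2.le (by linarith [hω.2])
    have h2 : ∫ ω in A, s ^ X ω ∂P ≤ ∫ ω in B X (n+1), s ^ X ω ∂P := by
      refine setIntegral_mono_set hint.integrableOn ?_
        (HasSubset.Subset.eventuallyLE hAsub)
      exact Eventually.of_forall fun ω => Real.rpow_nonneg hs.1.le _
    have h3 : ∫ ω in A, s ^ ((n:ℝ) + t) ∂P = c * s ^ ((n:ℝ) + t) := by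
      rw [setIntegral_const, smul_eq_mul, measureReal_def]
    have hfl : c * s ^ (t - 1) = c * s ^ ((n:ℝ) + t) / s ^ (n+1) := by
      rw [← Real.rpow_natCast s (n+1)]
      rw [mul_div_assoc, ← Real.rpow_sub hs.1]
      push_cast
      ring_nf
    rw [hfl]
    apply div_le_div_of_nonneg_right ?_ (pow_pos hs.1 (n+1)).le
    · rw [← h3]; exact h1.trans h2
  -- blow up
  have hblow : Tendsto (fun s : ℝ => c * s ^ (t - 1)) (nhdsWithin 0 (Set.Ioi 0)) atTop := by
    have hinv : Tendsto (fun s : ℝ => s⁻¹) (nhdsWithin 0 (Set.Ioi 0)) atTop :=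
      tendsto_inv_nhdsGT_zero
    have hr : Tendsto (fun x : ℝ => x ^ (1 - t)) atTop atTop :=
      tendsto_rpow_atTop (by linarith)
    have hcomp := hr.comp hinv
    have hcongr : Tendsto (fun s : ℝ => s ^ (t - 1)) (nhdsWithin 0 (Set.Ioi 0)) atTop := by
      refine hcomp.congr' ?_
      filter_upwards [self_mem_nhdsWithin] with s hs
      rw [Set.mem_Ioi] at hs
      rw [Function.comp_apply, ← Real.rpow_neg_one s, ← Real.rpow_mul hs.le,
        show (-1) * (1 - t) = t - 1 by ring]
    exact hcongr.const_mul_atTop hc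
  have hratio := tendsto_ratio_p hXm hX0 p hexp (n+1) hpq
  have hatTop : Tendsto (fun s : ℝ => (∫ ω in B X (n+1), s ^ X ω ∂P) / s ^ (n+1))
      (nhdsWithin 0 (Set.Ioi 0)) atTop := by
    refine tendsto_atTop_mono' _ ?_ hblow
    filter_upwards [Ioo_mem_nhdsGT_of_mem (Set.left_mem_Ico.2 one_pos)] with s hs
    exact hlow s hs
  exact not_tendsto_nhds_of_tendsto_atTop hatTop _ hratio

lemma main (hXm : Measurable X) (hX0 : ∀ᵐ ω ∂P, 0 ≤ X ω) (p : ℕ → ℝ)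
    (hexp : ∀ n : ℕ,
      (fun s : ℝ => (∫ ω, s ^ X ω ∂P) - ∑ k ∈ Finset.range (n + 1), p k * s ^ k)
        =o[nhdsWithin 0 (Set.Ioi 0)] fun s => s ^ n) :
    ∀ n : ℕ, (∀ᵐ ω ∂P, ω ∈ B X n → (n : ℝ) ≤ X ω) ∧
      (∀ k, k < n → (P {ω | X ω = (k : ℝ)}).toReal = p k) := by
  intro n
  induction n with
  | zero =>
      refine ⟨?_, fun k hk => absurd hk (Nat.not_lt_zero k)⟩
      filter_upwards [hX0] with ω h0 _
      exact_mod_cast h0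
  | succ n ih =>
      obtain ⟨hae, hpq⟩ := ih
      have h1 := tendsto_ratio hXm hX0 n hae
      have h2 := tendsto_ratio_p hXm hX0 p hexp n hpq
      have hqn : (P {ω | X ω = (n : ℝ)}).toReal = p n := tendsto_nhds_unique h1 h2
      have hpq' : ∀ k, k < n + 1 → (P {ω | X ω = (k : ℝ)}).toReal = p k := by
        intro k hk
        rcases Nat.lt_succ_iff_lt_or_eq.1 hk with hk' | rfl
        · exact hpq k hk'
        · exact hqn
      refine ⟨?_, hpq'⟩
      have hnull := null_Ioo hXm hX0 p hexp n hpq'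
      have hnae : ∀ᵐ ω ∂P, ω ∉ X ⁻¹' Set.Ioo (n : ℝ) (n + 1) :=
        measure_eq_zero_iff_ae_notMem.1 hnull
      filter_upwards [hae, hnae] with ω h1' h2' hB
      have hBn : ω ∈ B X n := fun k hk => hB k (hk.trans (Nat.lt_succ_self n))
      have hge := h1' hBn
      have hne : X ω ≠ (n : ℝ) := hB n (Nat.lt_succ_self n)
      push_cast
      by_contra hlt
      push_neg at hlt
      exact h2' (Set.mem_preimage.2 ⟨lt_of_le_of_ne hge (Ne.symm hne), by push_cast at hlt ⊢; linarith⟩)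

end GFAux

/-- **Recovering a probability generating function** (Lemma 3 of the paper): if `X ≥ 0`
is a random variable whose generating function `g(s) = E[s^X]` admits, for every `n`, the
expansion `g(s) = ∑_{k=0}^n p_k s^k + o(s^n)` as `s → 0+`, then `X` takes values in
`ℕ₀ = {0,1,2,…}` a.s., each `p_k` is nonnegative, and `P(X = k) = p_k` for all `k`. -/
theorem generating_function_expansion
    {Ω : Type*} [mΩ : MeasurableSpace Ω] {P : Measure Ω} [IsProbabilityMeasure P]
    {X : Ω → ℝ} (hXm : Measurable X) (hX0 : ∀ᵐ ω ∂P, 0 ≤ X ω)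
    (p : ℕ → ℝ)
    (hexp : ∀ n : ℕ,
      (fun s : ℝ => (∫ ω, s ^ X ω ∂P) - ∑ k ∈ Finset.range (n + 1), p k * s ^ k)
        =o[nhdsWithin 0 (Set.Ioi 0)] fun s => s ^ n) :
    (∀ᵐ ω ∂P, ∃ k : ℕ, X ω = k) ∧
    ∀ k : ℕ, 0 ≤ p k ∧ (P {ω | X ω = (k : ℝ)}).toReal = p k := by
  have hmain := GFAux.main hXm hX0 p hexp
  constructor
  · have hall : ∀ᵐ ω ∂P, ∀ n : ℕ, ω ∈ GFAux.B X (n+1) → ((n+1 : ℕ) : ℝ) ≤ X ω :=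
      ae_all_iff.2 fun n => (hmain (n+1)).1
    filter_upwards [hX0, hall] with ω h0 h
    by_contra hno
    push_neg at hno
    set n := ⌊X ω⌋₊ with hn_def
    have hle : (n : ℝ) ≤ X ω := Nat.floor_le h0
    have hlt : X ω < n + 1 := Nat.lt_floor_add_one (X ω)
    have hB : ω ∈ GFAux.B X (n+1) := fun k _ => hno k
    have := h n hB
    push_cast at this
    linarith
  · intro k
    have heq := (hmain (k+1)).2 k (Nat.lt_succ_self k)
    exact ⟨heq ▸ ENNReal.toReal_nonneg, heq⟩

end
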